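/- Let ρ be a density matrix on C^{d} with eigenvalues {r_i}. If d·‖ρ − I/d‖₁ ≤ 1 and d ≥ 2, then max_i |ln(r_i d)| ≤ d·‖ρ − I/d‖₁. -/

import Mathlib

open Matrix MeasureTheory Filter Kronecker
open scoped ComplexOrder

noncomputable def traceNorm {n : Type*} [Fintype n] [DecidableEq n] (X : Matrix n n ℂ) : ℝ :=
  ((Matrix.posSemidef_conjTranspose_mul_self X).1.eigenvectorUnitary.1 *
    diagonal (((↑) : ℝ → ℂ) ∘ Real.sqrt ∘ (Matrix.posSemidef_conjTranspose_mul_self X).1.eigenvalues) *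
    (star (Matrix.posSemidef_conjTranspose_mul_self X).1.eigenvectorUnitary : Matrix n n ℂ)).trace.re

noncomputable def frobNorm {n : Type*} [Fintype n] (X : Matrix n n ℂ) : ℝ :=
  Real.sqrt ((Xᴴ * X)).trace.re

noncomputable def opNorm {n : Type*} [Fintype n] [DecidableEq n] (X : Matrix n n ℂ) : ℝ :=
  ‖LinearMap.toContinuousLinearMap (Matrix.toEuclideanLin X)‖

private lemma conj_trace_eq {n : Type*} [Fintype n] [DecidableEq n]
    (U : Matrix.unitaryGroup n ℂ) (D : Matrix n n ℂ) :
    ((U : Matrix n n ℂ) * D * star (U : Matrix n n ℂ)).trace = D.trace := by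
  have h : star (U : Matrix n n ℂ) * U = 1 :=
    (Matrix.mem_unitaryGroup_iff').mp U.2
  rw [Matrix.trace_mul_cycle, h, Matrix.one_mul]

private lemma conj_mul_self {n : Type*} [Fintype n] [DecidableEq n]
    (U : Matrix.unitaryGroup n ℂ) (D : Matrix n n ℂ) :
    ((U : Matrix n n ℂ) * D * star (U : Matrix n n ℂ)) *
      ((U : Matrix n n ℂ) * D * star (U : Matrix n n ℂ)) =
    (U : Matrix n n ℂ) * (D * D) * star (U : Matrix n n ℂ) := by
  have h : star (U : Matrix n n ℂ) * U = 1 := (Matrix.mem_unitaryGroup_iff').mp U.2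
  rw [show ((U : Matrix n n ℂ) * D * star (U : Matrix n n ℂ)) *
      ((U : Matrix n n ℂ) * D * star (U : Matrix n n ℂ)) =
      (U : Matrix n n ℂ) * D * (star (U : Matrix n n ℂ) * (U : Matrix n n ℂ)) * D *
        star (U : Matrix n n ℂ) by noncomm_ring, h, Matrix.mul_one]
  noncomm_ring

open scoped MatrixOrder in
private lemma sqrt_conj_eq {n : Type*} [Fintype n] [DecidableEq n] (X B : Matrix n n ℂ)
    (hB : B.PosSemidef) (h : B ^ 2 = Xᴴ * X) :
    B = (Matrix.posSemidef_conjTranspose_mul_self X).1.eigenvectorUnitary.1 *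
    diagonal (((↑) : ℝ → ℂ) ∘ Real.sqrt ∘ (Matrix.posSemidef_conjTranspose_mul_self X).1.eigenvalues) *
    (star (Matrix.posSemidef_conjTranspose_mul_self X).1.eigenvectorUnitary : Matrix n n ℂ) := by
  have hP := Matrix.posSemidef_conjTranspose_mul_self X
  have e1 : (Matrix.posSemidef_conjTranspose_mul_self X).1.eigenvectorUnitary.1 *
    diagonal (((↑) : ℝ → ℂ) ∘ Real.sqrt ∘ (Matrix.posSemidef_conjTranspose_mul_self X).1.eigenvalues) *
    (star (Matrix.posSemidef_conjTranspose_mul_self X).1.eigenvectorUnitary : Matrix n n ℂ) =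
      (Matrix.posSemidef_conjTranspose_mul_self X).1.cfc Real.sqrt := by
    rw [Matrix.IsHermitian.cfc, Unitary.conjStarAlgAut_apply]; rfl
  rw [e1, ← Matrix.IsHermitian.cfc_eq]
  have h2 := CFC.sqrt_unique (a := Xᴴ * X) (b := B) (by rw [← pow_two]; exact h) hB.nonneg
  rw [CFC.sqrt_eq_cfc, cfc_nnreal_eq_real _ (Xᴴ * X)] at h2
  rw [show (fun x : ℝ => ((NNReal.sqrt x.toNNReal : NNReal) : ℝ)) = Real.sqrt from
    funext fun x => (Real.sqrt.eq_1 x).symm] at h2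
  exact h2.symm

/-- If `d ‖ρ − I/d‖₁ ≤ 1` and `d ≥ 2`, then for the eigenvalues `rᵢ` of the density
matrix `ρ` one has `max_i |ln(rᵢ d)| ≤ d ‖ρ − I/d‖₁`. -/
theorem abs_log_eigenvalue_le_trace_dist {d : ℕ} (hd : 2 ≤ d)
    (ρ : Matrix (Fin d) (Fin d) ℂ) (hρ : ρ.PosSemidef) (htr : ρ.trace = 1)
    (hsmall : (d : ℝ) * traceNorm (ρ - ((d : ℂ))⁻¹ • 1) ≤ 1) :
    ∀ i, |Real.log (hρ.1.eigenvalues i * d)| ≤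
      (d : ℝ) * traceNorm (ρ - ((d : ℂ))⁻¹ • 1) := by
  have hd0 : (0:ℝ) < d := by positivity
  have hdC : (d:ℂ) ≠ 0 := by exact_mod_cast hd0.ne'
  set U : Matrix.unitaryGroup (Fin d) ℂ := hρ.1.eigenvectorUnitary with hU
  set r : Fin d → ℝ := hρ.1.eigenvalues with hr
  set c : ℝ := (d:ℝ)⁻¹ with hc
  have hUU : (U : Matrix (Fin d) (Fin d) ℂ) * star (U : Matrix (Fin d) (Fin d) ℂ) = 1 :=
    (Matrix.mem_unitaryGroup_iff).mp U.2
  have hspec : ρ = (U : Matrix (Fin d) (Fin d) ℂ) *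
      Matrix.diagonal (RCLike.ofReal ∘ r) * star (U : Matrix (Fin d) (Fin d) ℂ) :=
    hρ.1.spectral_theorem
  set X : Matrix (Fin d) (Fin d) ℂ := ρ - ((d : ℂ))⁻¹ • 1 with hXdef
  -- X as conjugated diagonal
  have hdiag : Matrix.diagonal (fun i => ((r i - c : ℝ) : ℂ)) =
      Matrix.diagonal (RCLike.ofReal ∘ r) - ((d:ℂ))⁻¹ • 1 := by
    ext i j
    rcases eq_or_ne i j with rfl | hij
    · simp only [Matrix.diagonal_apply_eq, Matrix.sub_apply, Matrix.smul_apply,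
        Matrix.one_apply_eq, Function.comp_apply, smul_eq_mul, mul_one]
      push_cast
      rw [hc, Complex.ofReal_inv]
      norm_num
    · simp [Matrix.diagonal_apply_ne _ hij, Matrix.one_apply_ne hij]
  have hX : X = (U : Matrix (Fin d) (Fin d) ℂ) *
      Matrix.diagonal (fun i => ((r i - c : ℝ) : ℂ)) * star (U : Matrix (Fin d) (Fin d) ℂ) := by
    rw [hdiag, mul_sub, sub_mul, ← hspec]
    congr 1
    rw [Matrix.mul_smul, Matrix.smul_mul, Matrix.mul_one, hUU]
  -- the absolute-value conjugated diagonal is the sqrt of XᴴX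
  set B : Matrix (Fin d) (Fin d) ℂ := (U : Matrix (Fin d) (Fin d) ℂ) *
      Matrix.diagonal (fun i => ((|r i - c| : ℝ) : ℂ)) * star (U : Matrix (Fin d) (Fin d) ℂ)
    with hBdef
  have hB : B.PosSemidef := by
    rw [hBdef, Matrix.star_eq_conjTranspose]
    exact (Matrix.posSemidef_diagonal_iff.mpr fun i =>
      Complex.zero_le_real.mpr (abs_nonneg _)).mul_mul_conjTranspose_same _
  have hUsU : star (U : Matrix (Fin d) (Fin d) ℂ) * U = 1 :=
    (Matrix.mem_unitaryGroup_iff').mp U.2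
  have hstar : (star fun i => ((r i - c : ℝ) : ℂ)) = fun i => ((r i - c : ℝ) : ℂ) := by
    funext i
    simp [Complex.conj_ofReal]
  have hXH : Xᴴ = X := by
    rw [hX, Matrix.conjTranspose_mul, Matrix.conjTranspose_mul, Matrix.star_eq_conjTranspose,
      Matrix.conjTranspose_conjTranspose, Matrix.diagonal_conjTranspose, hstar,
      ← Matrix.mul_assoc]
  have hdd : (Matrix.diagonal fun i => ((|r i - c| : ℝ) : ℂ)) *
      (Matrix.diagonal fun i => ((|r i - c| : ℝ) : ℂ)) =
      (Matrix.diagonal fun i => ((r i - c : ℝ) : ℂ)) *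
      (Matrix.diagonal fun i => ((r i - c : ℝ) : ℂ)) := by
    have habs : (fun i => ((|r i - c| : ℝ) : ℂ) * ((|r i - c| : ℝ) : ℂ)) =
        fun i => ((r i - c : ℝ) : ℂ) * ((r i - c : ℝ) : ℂ) := by
      funext i
      rw [← Complex.ofReal_mul, ← Complex.ofReal_mul, abs_mul_abs_self]
    rw [Matrix.diagonal_mul_diagonal, Matrix.diagonal_mul_diagonal, habs]
  have hB2 : B ^ 2 = Xᴴ * X := by
    rw [hXH, hX, hBdef, pow_two, conj_mul_self, conj_mul_self, hdd]
  have hsqrt := sqrt_conj_eq X B hB hB2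
  have htN : traceNorm X = ∑ i, |r i - c| := by
    rw [traceNorm, ← hsqrt, hBdef, conj_trace_eq, Matrix.trace_diagonal]
    push_cast
    simp
  -- trace condition : ∑ r i = 1
  have hsum : ∑ i, r i = 1 := by
    have h1 : ρ.trace = ∑ i, ((r i : ℝ) : ℂ) := by
      rw [hspec, conj_trace_eq, Matrix.trace_diagonal]
      rfl
    have h2 : ((∑ i, r i : ℝ) : ℂ) = 1 := by
      push_cast
      rw [← h1, htr]
    exact_mod_cast h2
  have hsum0 : ∑ i, (r i - c) = 0 := by
    rw [Finset.sum_sub_distrib, hsum, Finset.sum_const, Finset.card_univ, Fintype.card_fin, hc]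
    rw [nsmul_eq_mul]
    field_simp
    norm_num
  -- each deviation is at most half the total
  have key : ∀ i, 2 * |r i - c| ≤ ∑ j, |r j - c| := by
    intro i
    have h1 : (r i - c) + ∑ j ∈ Finset.univ.erase i, (r j - c) = 0 := by
      rw [Finset.add_sum_erase _ (fun j => r j - c) (Finset.mem_univ i)]
      exact hsum0
    have h2 : |r i - c| = |∑ j ∈ Finset.univ.erase i, (r j - c)| := by
      rw [show (∑ j ∈ Finset.univ.erase i, (r j - c)) = -(r i - c) by linarith, abs_neg]
    calc 2 * |r i - c| = |r i - c| + |r i - c| := by ring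
      _ ≤ |r i - c| + ∑ j ∈ Finset.univ.erase i, |r j - c| := by
          rw [h2]
          exact add_le_add_right (Finset.abs_sum_le_sum_abs _ _) _
      _ = ∑ j, |r j - c| := Finset.add_sum_erase _ (fun j => |r j - c|) (Finset.mem_univ i)
  intro i
  set t : ℝ := (d : ℝ) * traceNorm X with ht
  have hS0 : (0:ℝ) ≤ ∑ j, |r j - c| := Finset.sum_nonneg fun j _ => abs_nonneg _
  have ht0 : 0 ≤ t := by rw [ht, htN]; positivity
  set x : ℝ := r i * d with hx
  have hdev : |x - 1| ≤ t / 2 := by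
    have : x - 1 = (d:ℝ) * (r i - c) := by
      rw [hx, hc]
      field_simp
      try ring
    rw [this, abs_mul, abs_of_nonneg hd0.le, ht, htN]
    nlinarith [key i]
  have hxlb : 1/2 ≤ x := by
    have := abs_le.mp hdev
    linarith [hsmall]
  have hx0 : (0:ℝ) < x := by linarith
  rcases le_or_gt 1 x with h1 | h1
  · rw [abs_of_nonneg (Real.log_nonneg h1)]
    have := Real.log_le_sub_one_of_pos hx0
    have := abs_le.mp hdev
    linarith
  · have hlogneg : Real.log x < 0 := Real.log_neg hx0 h1
    rw [abs_of_neg hlogneg, ← Real.log_inv]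
    have hinv := Real.log_le_sub_one_of_pos (inv_pos.mpr hx0)
    have hxx : x * x⁻¹ = 1 := mul_inv_cancel₀ hx0.ne'
    have := abs_le.mp hdev
    have htle : t ≤ 1 := by rw [ht]; exact hsmall
    have hinvle : x⁻¹ - 1 ≤ t := by nlinarith [inv_pos.mpr hx0]
    linarith
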